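/- Let k° be a valuation ring with a nonzero nonunit π, and let A = k°[t_0,…,t_m, v_1,…,v_r]/(t_0⋯t_m − π). Fix l > 0, set v = (v_1⋯v_r)^l and d = (m+1)l. Then the v-chart of the blowing up of Spec(A) along the ideal (t_0,…,t_m, v) is isomorphic to Spec(k°[t'_0,…,t'_m, v_1,…,v_r]/(t'_0⋯t'_m·v_1^d⋯v_r^d − π)), where t'_i corresponds to t_i/v. -/

import Mathlib

open MvPolynomial

/-- Variables: `Sum.inl i = tᵢ`, `Sum.inr (Sum.inl i) = t'ᵢ`, `Sum.inr (Sum.inr j) = vⱼ`. -/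
abbrev BlowupVars (m r : ℕ) := Fin (m + 1) ⊕ (Fin (m + 1) ⊕ Fin r)

/-- The element `v = (v₁⋯v_r)^l`. -/
noncomputable def blowupV (K0 : Type) [CommRing K0] (m r l : ℕ) :
    MvPolynomial (BlowupVars m r) K0 :=
  (∏ j : Fin r, X (Sum.inr (Sum.inr j))) ^ l

/-- The relations of the `v`-chart of the blowup of
`A = k°[t,v]/(t₀⋯t_m − π)` along `(t₀,…,t_m, v)`: the relation `t₀⋯t_m = π`
together with `v·t'ᵢ = tᵢ` for each `i`. -/
noncomputable def blowupChartRels (K0 : Type) [CommRing K0] (m r l : ℕ) (π : K0) :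
    Set (MvPolynomial (BlowupVars m r) K0) :=
  {(∏ i : Fin (m + 1), X (Sum.inl i)) - C π} ∪
    {p | ∃ i : Fin (m + 1),
      p = blowupV K0 m r l * X (Sum.inr (Sum.inl i)) - X (Sum.inl i)}

/-- The `v`-chart of the blowup: the quotient by the chart relations, further divided by
its `v`-torsion (the kernel of the map to the localization away from `v`). -/
noncomputable def blowupChart (K0 : Type) [CommRing K0] (m r l : ℕ) (π : K0) : Type :=
  letI Bq := MvPolynomial (BlowupVars m r) K0 ⧸ Ideal.span (blowupChartRels K0 m r l π)
  Bq ⧸ RingHom.ker (algebraMap Bq (Localization.Away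
    (Ideal.Quotient.mk (Ideal.span (blowupChartRels K0 m r l π)) (blowupV K0 m r l))))

noncomputable instance (K0 : Type) [CommRing K0] (m r l : ℕ) (π : K0) :
    CommRing (blowupChart K0 m r l π) := by
  unfold blowupChart; infer_instance

/-- The target ring `k°[t'₀,…,t'_m,v₁,…,v_r]/(t'₀⋯t'_m·v₁^d⋯v_r^d − π)`, `d = (m+1)l`. -/
noncomputable def blowupChartModel (K0 : Type) [CommRing K0] (m r l : ℕ) (π : K0) : Type :=
  MvPolynomial (Fin (m + 1) ⊕ Fin r) K0 ⧸ Ideal.span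
    {(∏ i : Fin (m + 1), X (Sum.inl i)) *
      (∏ j : Fin r, (X (Sum.inr j) : MvPolynomial (Fin (m + 1) ⊕ Fin r) K0) ^ ((m + 1) * l))
      - C π}

noncomputable instance (K0 : Type) [CommRing K0] (m r l : ℕ) (π : K0) :
    CommRing (blowupChartModel K0 m r l π) := by
  unfold blowupChartModel; infer_instance

section Aux

variable (K0 : Type) [CommRing K0] (m r l : ℕ) (π : K0)

noncomputable def auxG : MvPolynomial (Fin (m + 1) ⊕ Fin r) K0 :=
  (∏ i : Fin (m + 1), X (Sum.inl i)) *
    (∏ j : Fin r, (X (Sum.inr j) : MvPolynomial (Fin (m + 1) ⊕ Fin r) K0) ^ ((m + 1) * l))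
    - C π

noncomputable def auxI : Ideal (MvPolynomial (BlowupVars m r) K0) :=
  Ideal.span (blowupChartRels K0 m r l π)

noncomputable def auxJ : Ideal (MvPolynomial (Fin (m + 1) ⊕ Fin r) K0) :=
  Ideal.span {auxG K0 m r l π}

noncomputable def auxPhi :
    MvPolynomial (BlowupVars m r) K0 →ₐ[K0] MvPolynomial (Fin (m + 1) ⊕ Fin r) K0 :=
  aeval fun s => match s with
    | Sum.inl i => X (Sum.inl i) * (∏ j : Fin r, X (Sum.inr j)) ^ l
    | Sum.inr (Sum.inl i) => X (Sum.inl i)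
    | Sum.inr (Sum.inr j) => X (Sum.inr j)

noncomputable def auxPsi :
    MvPolynomial (Fin (m + 1) ⊕ Fin r) K0 →ₐ[K0] MvPolynomial (BlowupVars m r) K0 :=
  aeval fun s => match s with
    | Sum.inl i => X (Sum.inr (Sum.inl i))
    | Sum.inr j => X (Sum.inr (Sum.inr j))

@[simp] lemma auxPhi_X_inl (i : Fin (m + 1)) :
    auxPhi K0 m r l (X (Sum.inl i)) = X (Sum.inl i) * (∏ j : Fin r, X (Sum.inr j)) ^ l :=
  aeval_X _ _

@[simp] lemma auxPhi_X_inr_inl (i : Fin (m + 1)) :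
    auxPhi K0 m r l (X (Sum.inr (Sum.inl i))) = X (Sum.inl i) :=
  aeval_X _ _

@[simp] lemma auxPhi_X_inr_inr (j : Fin r) :
    auxPhi K0 m r l (X (Sum.inr (Sum.inr j))) = X (Sum.inr j) :=
  aeval_X _ _

@[simp] lemma auxPsi_X_inl (i : Fin (m + 1)) :
    auxPsi K0 m r (X (Sum.inl i)) = X (Sum.inr (Sum.inl i)) :=
  aeval_X _ _

@[simp] lemma auxPsi_X_inr (j : Fin r) :
    auxPsi K0 m r (X (Sum.inr j)) = X (Sum.inr (Sum.inr j)) :=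
  aeval_X _ _

@[simp] lemma auxPhi_C (a : K0) : auxPhi K0 m r l (C a) = C a := by
  simp [auxPhi, algebraMap_eq]

@[simp] lemma auxPsi_C (a : K0) : auxPsi K0 m r (C a) = C a := by
  simp [auxPsi, algebraMap_eq]

lemma auxPhi_g : auxPhi K0 m r l ((∏ i : Fin (m + 1), X (Sum.inl i)) - C π) =
    auxG K0 m r l π := by
  rw [map_sub, map_prod]
  simp only [auxPhi_X_inl, auxPhi_C]
  rw [auxG, Finset.prod_mul_distrib, Finset.prod_const, Finset.card_univ, Fintype.card_fin,
    ← pow_mul, mul_comm l (m + 1), Finset.prod_pow]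

lemma auxPhi_blowupV :
    auxPhi K0 m r l (blowupV K0 m r l) = (∏ j : Fin r, X (Sum.inr j)) ^ l := by
  rw [blowupV, map_pow, map_prod]
  simp only [auxPhi_X_inr_inr]

lemma auxPhi_rels : ∀ p ∈ blowupChartRels K0 m r l π,
    (Ideal.Quotient.mk (auxJ K0 m r l π)) (auxPhi K0 m r l p) = 0 := by
  rintro p (rfl | ⟨i, rfl⟩)
  · rw [auxPhi_g]
    exact Ideal.Quotient.eq_zero_iff_mem.mpr (Ideal.subset_span rfl)
  · rw [map_sub, map_mul, auxPhi_blowupV, auxPhi_X_inr_inl, auxPhi_X_inl, mul_comm,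
      sub_self, map_zero]

noncomputable def auxPhiBar :
    (MvPolynomial (BlowupVars m r) K0 ⧸ auxI K0 m r l π) →+*
      (MvPolynomial (Fin (m + 1) ⊕ Fin r) K0 ⧸ auxJ K0 m r l π) :=
  Ideal.Quotient.lift _ ((Ideal.Quotient.mk (auxJ K0 m r l π)).comp (auxPhi K0 m r l).toRingHom)
    (fun a ha => by
      refine RingHom.mem_ker.mp (Ideal.span_le.mpr ?_ ha)
      intro p hp
      exact RingHom.mem_ker.mpr (auxPhi_rels K0 m r l π p hp))

@[simp] lemma auxPhiBar_mk (p : MvPolynomial (BlowupVars m r) K0) :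
    auxPhiBar K0 m r l π (Ideal.Quotient.mk _ p) =
      Ideal.Quotient.mk _ (auxPhi K0 m r l p) :=
  rfl

lemma auxPsi_g_mem : auxPsi K0 m r (auxG K0 m r l π) ∈ auxI K0 m r l π := by
  rw [← Ideal.Quotient.eq_zero_iff_mem]
  set mkI := Ideal.Quotient.mk (auxI K0 m r l π)
  have hrel1 : mkI (∏ i : Fin (m + 1), X (Sum.inl i)) = mkI (C π) := by
    rw [Ideal.Quotient.mk_eq_mk_iff_sub_mem]
    exact Ideal.subset_span (Or.inl rfl)
  have hrel2 : ∀ i : Fin (m + 1),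
      mkI (blowupV K0 m r l * X (Sum.inr (Sum.inl i))) = mkI (X (Sum.inl i)) := by
    intro i
    rw [Ideal.Quotient.mk_eq_mk_iff_sub_mem]
    exact Ideal.subset_span (Or.inr ⟨i, rfl⟩)
  have h1 : auxPsi K0 m r (auxG K0 m r l π) =
      (∏ i : Fin (m + 1), X (Sum.inr (Sum.inl i))) * blowupV K0 m r l ^ (m + 1) - C π := by
    rw [auxG, map_sub, map_mul, map_prod, map_prod]
    simp only [auxPsi_X_inl, map_pow, auxPsi_X_inr, auxPsi_C]
    rw [blowupV, ← pow_mul, mul_comm l (m + 1), Finset.prod_pow]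
  have h2 : (∏ i : Fin (m + 1), X (Sum.inr (Sum.inl i) : BlowupVars m r)) *
      blowupV K0 m r l ^ (m + 1) =
      ∏ i : Fin (m + 1), (blowupV K0 m r l * X (Sum.inr (Sum.inl i))) := by
    rw [Finset.prod_mul_distrib, Finset.prod_const, Finset.card_univ, Fintype.card_fin, mul_comm]
  rw [h1, map_sub, h2, map_prod]
  simp only [hrel2]
  rw [← map_prod, hrel1, sub_self]

noncomputable def auxPsiBar :
    (MvPolynomial (Fin (m + 1) ⊕ Fin r) K0 ⧸ auxJ K0 m r l π) →+*
      (MvPolynomial (BlowupVars m r) K0 ⧸ auxI K0 m r l π) :=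
  Ideal.Quotient.lift _ ((Ideal.Quotient.mk (auxI K0 m r l π)).comp (auxPsi K0 m r).toRingHom)
    (fun a ha => by
      obtain ⟨c, hc⟩ := Ideal.mem_span_singleton'.mp ha
      subst hc
      simp only [RingHom.comp_apply, AlgHom.toRingHom_eq_coe, RingHom.coe_coe, map_mul]
      rw [Ideal.Quotient.eq_zero_iff_mem.mpr (auxPsi_g_mem K0 m r l π), mul_zero])

@[simp] lemma auxPsiBar_mk (p : MvPolynomial (Fin (m + 1) ⊕ Fin r) K0) :
    auxPsiBar K0 m r l π (Ideal.Quotient.mk _ p) =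
      Ideal.Quotient.mk _ (auxPsi K0 m r p) :=
  rfl

lemma aux_left : (auxPsiBar K0 m r l π).comp (auxPhiBar K0 m r l π) =
    RingHom.id _ := by
  apply Ideal.Quotient.ringHom_ext
  apply MvPolynomial.ringHom_ext
  · intro a
    simp
  · rintro (i | i | j)
    · have key : auxPsi K0 m r (auxPhi K0 m r l (X (Sum.inl i))) =
          blowupV K0 m r l * X (Sum.inr (Sum.inl i)) := by
        rw [auxPhi_X_inl, map_mul, map_pow, map_prod, auxPsi_X_inl]
        simp only [auxPsi_X_inr]
        rw [mul_comm, blowupV]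
      simp only [RingHom.comp_apply, RingHom.id_apply, auxPhiBar_mk, auxPsiBar_mk, key]
      rw [Ideal.Quotient.mk_eq_mk_iff_sub_mem]
      exact Ideal.subset_span (Or.inr ⟨i, rfl⟩)
    · simp
    · simp

lemma aux_right : (auxPhiBar K0 m r l π).comp (auxPsiBar K0 m r l π) =
    RingHom.id _ := by
  apply Ideal.Quotient.ringHom_ext
  apply MvPolynomial.ringHom_ext
  · intro a
    simp
  · rintro (i | j) <;> simp

noncomputable def auxEquiv :
    (MvPolynomial (BlowupVars m r) K0 ⧸ auxI K0 m r l π) ≃+*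
      (MvPolynomial (Fin (m + 1) ⊕ Fin r) K0 ⧸ auxJ K0 m r l π) :=
  RingEquiv.ofRingHom (auxPhiBar K0 m r l π) (auxPsiBar K0 m r l π)
    (aux_right K0 m r l π) (aux_left K0 m r l π)

end Aux

lemma prime_X_mv {σ R : Type*} [CommRing R] [IsDomain R] (s : σ) :
    Prime (X s : MvPolynomial σ R) := by
  classical
  let e : MvPolynomial σ R ≃ₐ[R] Polynomial (MvPolynomial {b : σ // b ≠ s} R) :=
    (renameEquiv R (Equiv.optionSubtypeNe s)).symm.trans (optionEquivLeft R {b : σ // b ≠ s})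
  have hx : e (X s) = Polynomial.X := by
    have h1 : (renameEquiv R (Equiv.optionSubtypeNe s)).symm (X s) = X none := by
      simp [renameEquiv_symm, Equiv.optionSubtypeNe_symm_self]
    simp [e, AlgEquiv.trans_apply, h1, optionEquivLeft_X_none]
  rw [← MulEquiv.prime_iff e.toRingEquiv.toMulEquiv]
  show Prime (e (X s))
  rw [hx]
  exact Polynomial.prime_X

section Aux2

variable (K0 : Type) [CommRing K0] [IsDomain K0] (m r l : ℕ) (π : K0)

lemma aux_not_X_dvd_g (hπ0 : π ≠ 0) (j : Fin r) :
    ¬ (X (Sum.inr j) : MvPolynomial (Fin (m + 1) ⊕ Fin r) K0) ∣ auxG K0 m r l π := by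
  rintro ⟨w, hw⟩
  have h0 : constantCoeff (auxG K0 m r l π) = -π := by
    rw [auxG, map_sub, map_mul, map_prod]
    rw [Finset.prod_eq_zero (Finset.mem_univ (0 : Fin (m + 1))) (by simp)]
    simp
  rw [hw, map_mul, constantCoeff_X, zero_mul] at h0
  exact hπ0 (neg_eq_zero.mp h0.symm)

lemma aux_X_nzd (hπ0 : π ≠ 0) (j : Fin r) :
    (Ideal.Quotient.mk (auxJ K0 m r l π) (X (Sum.inr j))) ∈
      nonZeroDivisors (MvPolynomial (Fin (m + 1) ⊕ Fin r) K0 ⧸ auxJ K0 m r l π) := by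
  rw [mem_nonZeroDivisors_iff_left]
  intro x hx
  obtain ⟨h, rfl⟩ := Ideal.Quotient.mk_surjective x
  rw [← map_mul, Ideal.Quotient.eq_zero_iff_mem] at hx
  obtain ⟨q, hq⟩ := Ideal.mem_span_singleton'.mp hx
  have hdvd : (X (Sum.inr j) : MvPolynomial (Fin (m + 1) ⊕ Fin r) K0) ∣
      q * auxG K0 m r l π := ⟨h, by rw [hq, mul_comm]⟩
  rcases (prime_X_mv (Sum.inr j)).2.2 q _ hdvd with hXq | hXg
  · obtain ⟨q', rfl⟩ := hXq
    have hcan : X (Sum.inr j) * (q' * auxG K0 m r l π) = X (Sum.inr j) * h := by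
      rw [← mul_assoc, hq, mul_comm]
    have : q' * auxG K0 m r l π = h := mul_left_cancel₀ (X_ne_zero _) hcan
    rw [Ideal.Quotient.eq_zero_iff_mem]
    exact Ideal.mem_span_singleton'.mpr ⟨q', this⟩
  · exact absurd hXg (aux_not_X_dvd_g K0 m r l π hπ0 j)

lemma aux_v_nzd (hπ0 : π ≠ 0) :
    (Ideal.Quotient.mk (auxI K0 m r l π) (blowupV K0 m r l)) ∈
      nonZeroDivisors (MvPolynomial (BlowupVars m r) K0 ⧸ auxI K0 m r l π) := by
  have hV : (Ideal.Quotient.mk (auxJ K0 m r l π)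
      ((∏ j : Fin r, X (Sum.inr j)) ^ l)) ∈
      nonZeroDivisors (MvPolynomial (Fin (m + 1) ⊕ Fin r) K0 ⧸ auxJ K0 m r l π) := by
    rw [map_pow, map_prod]
    exact pow_mem (Submonoid.prod_mem _ (fun j _ => aux_X_nzd K0 m r l π hπ0 j)) l
  have he : auxEquiv K0 m r l π (Ideal.Quotient.mk _ (blowupV K0 m r l)) =
      Ideal.Quotient.mk _ ((∏ j : Fin r, X (Sum.inr j)) ^ l) := by
    show auxPhiBar K0 m r l π (Ideal.Quotient.mk _ (blowupV K0 m r l)) = _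
    rw [auxPhiBar_mk, auxPhi_blowupV]
  rw [mem_nonZeroDivisors_iff_left]
  intro x hx
  have h2 := congrArg (auxEquiv K0 m r l π) hx
  rw [map_mul, map_zero, he] at h2
  have hx0 : auxEquiv K0 m r l π x = 0 := mem_nonZeroDivisors_iff_left.mp hV _ h2
  exact (auxEquiv K0 m r l π).injective (by rw [hx0, map_zero])

end Aux2

theorem stmt9' (K0 : Type) [CommRing K0] [IsDomain K0] [ValuationRing K0]
    (π : K0) (hπ0 : π ≠ 0) (hπu : ¬ IsUnit π) (m r l : ℕ) (hl : 0 < l) :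
    Nonempty (
      (letI Bq := MvPolynomial (BlowupVars m r) K0 ⧸ Ideal.span (blowupChartRels K0 m r l π)
       Bq ⧸ RingHom.ker (algebraMap Bq (Localization.Away
        (Ideal.Quotient.mk (Ideal.span (blowupChartRels K0 m r l π)) (blowupV K0 m r l)))))
      ≃+*
      (MvPolynomial (Fin (m + 1) ⊕ Fin r) K0 ⧸ Ideal.span
        {(∏ i : Fin (m + 1), X (Sum.inl i)) *
          (∏ j : Fin r, (X (Sum.inr j) : MvPolynomial (Fin (m + 1) ⊕ Fin r) K0) ^ ((m + 1) * l))
          - C π})) := by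
  have hv := aux_v_nzd K0 m r l π hπ0
  set Bq := MvPolynomial (BlowupVars m r) K0 ⧸ auxI K0 m r l π with hBq
  set v : Bq := Ideal.Quotient.mk (auxI K0 m r l π) (blowupV K0 m r l) with hvdef
  have hle : Submonoid.powers v ≤ nonZeroDivisors Bq := by
    rintro x ⟨n, rfl⟩
    exact pow_mem hv n
  have hinj : Function.Injective (algebraMap Bq (Localization.Away v)) :=
    IsLocalization.injective _ hle
  have hker : RingHom.ker (algebraMap Bq (Localization.Away v)) = ⊥ :=
    (RingHom.injective_iff_ker_eq_bot _).mp hinj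
  set K := RingHom.ker (algebraMap Bq (Localization.Away v)) with hK
  have hbij : Function.Bijective (Ideal.Quotient.mk K) :=
    ⟨(RingHom.injective_iff_ker_eq_bot _).mpr (by rw [Ideal.mk_ker, hker]),
      Ideal.Quotient.mk_surjective⟩
  exact ⟨((RingEquiv.ofBijective (Ideal.Quotient.mk K) hbij).symm.trans
    (auxEquiv K0 m r l π))⟩

/-- over a valuation ring `k°` with nonzero nonunit `π`, the `v`-chart
(`v = (v₁⋯v_r)^l`, `l > 0`) of the blowing up of
`Spec k°[t,v]/(t₀⋯t_m − π)` along `(t₀,…,t_m,v)` is isomorphic to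
`Spec k°[t',v]/(t'₀⋯t'_m·v₁^d⋯v_r^d − π)` with `d = (m+1)l`, where `t'ᵢ ↦ tᵢ/v`. -/
theorem stmt9 (K0 : Type) [CommRing K0] [IsDomain K0] [ValuationRing K0]
    (π : K0) (hπ0 : π ≠ 0) (hπu : ¬ IsUnit π) (m r l : ℕ) (hl : 0 < l) :
    Nonempty (blowupChart K0 m r l π ≃+* blowupChartModel K0 m r l π) := by
  unfold blowupChart blowupChartModel
  exact stmt9' K0 π hπ0 hπu m r l hl
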